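/- For integers m ≥ n ≥ 0, the n+1 zigzag monomials (𝖾𝗇)^a(𝗇𝖾)^{n−a}𝗇^{m−n} (0 ≤ a ≤ n) are linearly independent over ℂ(q) in the path algebra 𝒫, and their span equals 𝒫_{m,n}; that is, they form a basis of 𝒫_{m,n}. -/

import Mathlib

noncomputable section

/-- The base field `F = ℂ(q)`. -/
abbrev F : Type := RatFunc ℂ

/-- The indeterminate `q`. -/
def qq : F := RatFunc.X

/-- The `q`-integer `[j]_q = 1 + q + ⋯ + q^(j-1)`. -/
def qint (j : ℕ) : F := ∑ i ∈ Finset.range j, qq ^ i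

/-- The `q`-factorial `[j]_q! = [1]_q ⋯ [j]_q`. -/
def qfact (j : ℕ) : F := ∏ i ∈ Finset.range j, qint (i + 1)

/-- Modular relations defining the path algebra `𝒫`; the letter `true` is `𝗇`,
the letter `false` is `𝖾`. -/
inductive PathRel : FreeAlgebra F Bool → FreeAlgebra F Bool → Prop where
  | mod1 : PathRel
      ((1 + qq) • (FreeAlgebra.ι F false * FreeAlgebra.ι F true * FreeAlgebra.ι F false))
      (qq • (FreeAlgebra.ι F false * FreeAlgebra.ι F false * FreeAlgebra.ι F true) +
        FreeAlgebra.ι F true * FreeAlgebra.ι F false * FreeAlgebra.ι F false)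
  | mod2 : PathRel
      ((1 + qq) • (FreeAlgebra.ι F true * FreeAlgebra.ι F false * FreeAlgebra.ι F true))
      (qq • (FreeAlgebra.ι F false * FreeAlgebra.ι F true * FreeAlgebra.ι F true) +
        FreeAlgebra.ι F true * FreeAlgebra.ι F true * FreeAlgebra.ι F false)

/-- The path algebra `𝒫`. -/
abbrev PathAlg : Type := RingQuot PathRel

/-- The generator `𝗇` of `𝒫`. -/
def Pn : PathAlg := RingQuot.mkAlgHom F PathRel (FreeAlgebra.ι F true)

/-- The generator `𝖾` of `𝒫`. -/
def Pe : PathAlg := RingQuot.mkAlgHom F PathRel (FreeAlgebra.ι F false)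

/-- The element of `𝒫` determined by a word in `𝗇` (`true`) and `𝖾` (`false`). -/
def wordElem (w : List Bool) : PathAlg := (w.map fun b => if b then Pn else Pe).prod

/-- `𝒫_{m,n}`: the span of words with `m` letters `𝗇` and `n` letters `𝖾`. -/
def Pmn (m n : ℕ) : Submodule F PathAlg :=
  Submodule.span F {x | ∃ w : List Bool, w.count true = m ∧ w.count false = n ∧ x = wordElem w}

/-- `lam` (0-indexed list of parts) is a partition contained in the `m × n` box. -/
def IsPartitionIn (m n : ℕ) (lam : ℕ → ℕ) : Prop :=
  (∀ i j, i ≤ j → lam j ≤ lam i) ∧ (∀ i, lam i ≤ n) ∧ (∀ i, m ≤ i → lam i = 0)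

/-- `eastBefore w r` = number of east steps (`false`) preceding the `(r+1)`-st
north step (`true`) of `w`. -/
def eastBefore : List Bool → ℕ → ℕ
  | [], _ => 0
  | true :: _, 0 => 0
  | true :: w, r + 1 => eastBefore w r
  | false :: w, r => eastBefore w r + 1

/-- `northBefore w r` = number of north steps (`true`) preceding the `(r+1)`-st
east step (`false`) of `w`. -/
def northBefore : List Bool → ℕ → ℕ
  | [], _ => 0
  | false :: _, 0 => 0
  | false :: w, r + 1 => northBefore w r
  | true :: w, r => northBefore w r + 1

/-- The partition `λ(w)` of a word with `m` letters `𝗇`, as a 0-indexed function: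
row `i` (from the top) of the partition has `eastBefore w (m-1-i)` cells. -/
def wordLam (m : ℕ) (w : List Bool) : ℕ → ℕ :=
  fun i => if i < m then eastBefore w (m - 1 - i) else 0

/-- The word `w(λ)` of a partition `λ ⊆ m × n` (given as 0-indexed `lam : ℕ → ℕ`). -/
def wordOf (m n : ℕ) (lam : ℕ → ℕ) : List Bool :=
  ((List.range m).flatMap fun k =>
    List.replicate (lam (m - 1 - k) - lam (m - k)) false ++ [true]) ++
    List.replicate (n - lam 0) false

/-- The rook in column `j` of the placement `ρ` lies inside the Ferrers board of `lam`. -/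
def rookInside (m n : ℕ) (lam : ℕ → ℕ) (ρ : Fin n ↪ Fin m) (j : Fin n) : Prop :=
  (j : ℕ) < lam (ρ j)

/-- The cell in row `i` (0-indexed from the top) and column `j` (0-indexed from the left)
is unattacked for the maximal non-attacking rook placement `ρ` (with the Ferrers board of
`lam` drawn in the top-left corner of the `m × n` board). -/
def Unattacked (m n : ℕ) (lam : ℕ → ℕ) (ρ : Fin n ↪ Fin m) (i : Fin m) (j : Fin n) : Prop :=
  ρ j ≠ i ∧ ¬ ((ρ j : ℕ) < (i : ℕ)) ∧
    (if (j : ℕ) < lam i then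
      (∀ j' : Fin n, ρ j' = i → ¬ (j' < j)) ∧
      (∀ j' : Fin n, ρ j' = i → j < j' → (j' : ℕ) < lam i)
    else
      ∀ j' : Fin n, ρ j' = i → j' < j → (j' : ℕ) < lam i)

/-- `stat ρ` = number of unattacked cells. -/
def statRook (m n : ℕ) (lam : ℕ → ℕ) (ρ : Fin n ↪ Fin m) : ℕ :=
  Set.ncard {p : Fin m × Fin n | Unattacked m n lam ρ p.1 p.2}

/-- The `q`-hit number `H_k^{m,n}(λ)`. -/
def qHit (m n : ℕ) (lam : ℕ → ℕ) (k : ℕ) : F :=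
  ∑ ρ : Fin n ↪ Fin m,
    if Set.ncard {j : Fin n | rookInside m n lam ρ j} = k then qq ^ statRook m n lam ρ else 0

/-- A Dyck word of size `N`. -/
def IsDyck (N : ℕ) (w : List Bool) : Prop :=
  w.count true = N ∧ w.count false = N ∧
    ∀ p : ℕ, (w.take p).count false ≤ (w.take p).count true

/-- Adjacency of the Dyck graph `G(D)` of a Dyck word of size `N` on vertices `Fin N`
(0-indexed: vertex `a` is the vertex `a+1` of `{1,…,N}`). -/
def dyckAdj (N : ℕ) (w : List Bool) (a b : Fin N) : Prop :=
  ((a : ℕ) < b ∧ (b : ℕ) < northBefore w a) ∨ ((b : ℕ) < a ∧ (a : ℕ) < northBefore w b)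

/-- Proper colorings of the Dyck graph `G(w)` with `ν` colors. -/
def properColorings (N ν : ℕ) (w : List Bool) : Set (Fin N → Fin ν) :=
  {κ | ∀ a b : Fin N, dyckAdj N w a b → κ a ≠ κ b}

/-- Number of ascents of a coloring. -/
def ascColor (N ν : ℕ) (w : List Bool) (κ : Fin N → Fin ν) : ℕ :=
  Set.ncard {p : Fin N × Fin N | (p.1 : ℕ) < p.2 ∧ dyckAdj N w p.1 p.2 ∧ κ p.1 < κ p.2}

open scoped Classical in
/-- The chromatic quasisymmetric polynomial `X_{G(w)}(x_1,…,x_ν; q)`. -/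
def chromX (N ν : ℕ) (w : List Bool) : MvPolynomial (Fin ν) F :=
  ∑ κ : Fin N → Fin ν,
    if κ ∈ properColorings N ν w then
      MvPolynomial.C (qq ^ ascColor N ν w κ) * ∏ a : Fin N, MvPolynomial.X (κ a)
    else 0

/-- The staircase word `δ_k = 𝖾^{n-k}(𝗇𝖾)^k𝗇^{m-k}`. -/
def deltaWord (m n k : ℕ) : List Bool :=
  List.replicate (n - k) false ++ (List.replicate k [true, false]).flatten ++
    List.replicate (m - k) true

/-- `m_w`: the largest `k` with `λ(w) ⊆ λ(δ_k)`, i.e. such that the path of `δ_k`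
lies weakly below the path of `w`. -/
def mw (m n : ℕ) (w : List Bool) : ℕ :=
  Finset.sup ((Finset.range (min m n + 1)).filter fun k =>
    ∀ i ∈ Finset.range m, wordLam m w i ≤ wordLam m (deltaWord m n k) i) id

/-- The lattice paths of `w` and `d` share the unit step of `w` corresponding to
the letter at (0-indexed) position `p` of `w`. -/
def StepShared (w d : List Bool) (p : ℕ) : Prop :=
  ∃ p' : ℕ, p' < d.length ∧ d[p']? = w[p]? ∧
    (d.take p').count true = (w.take p).count true ∧
    (d.take p').count false = (w.take p).count false

/-- `w` possesses a critical factor: a factor `𝗇^i𝖾` or `𝗇𝖾^i` with `i ≥ 2`, whose run of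
repeated letters is maximal within `w`, and whose letters contain a unit step shared by
the lattice paths of `w` and of `δ_{m_w}`. -/
def HasCriticalFactor (m n : ℕ) (w : List Bool) : Prop :=
  ∃ (x y : List Bool) (i : ℕ), 2 ≤ i ∧
    ((w = x ++ (List.replicate i true ++ [false]) ++ y ∧ x.getLast? ≠ some true ∧
        ∃ p, x.length ≤ p ∧ p < x.length + i + 1 ∧ StepShared w (deltaWord m n (mw m n w)) p) ∨
      (w = x ++ ([true] ++ List.replicate i false) ++ y ∧ y.head? ≠ some false ∧
        ∃ p, x.length ≤ p ∧ p < x.length + i + 1 ∧ StepShared w (deltaWord m n (mw m n w)) p))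

/-- Evaluation of a (commutative) polynomial in two variables at the commuting elements
`s`, `t` of `𝒫`. -/
def evalST (s t : PathAlg) (P : MvPolynomial (Fin 2) F) : PathAlg :=
  ∑ d ∈ P.support, P.coeff d • (s ^ (d 0) * t ^ (d 1))

/-- The conjugate partition: `conjP m lam i = λ'_i = #{rows r : λ_r ≥ i}` (here `i ≥ 1`,
rows 0-indexed, `lam` supported on `[0, m)`). -/
def conjP (m : ℕ) (lam : ℕ → ℕ) (i : ℕ) : ℕ :=
  ((Finset.range m).filter fun r => i ≤ lam r).card

/-- The sequence `b(λ) = (b_1,…,b_n)` (1-indexed `i`) for `λ ⊆ m × n`, `m ≥ n`. -/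
def bSeq (m : ℕ) (lam : ℕ → ℕ) (i : ℕ) : ℤ :=
  if lam (m - i) < i then (m : ℤ) + 1 - i - conjP m lam i else (i : ℤ) - lam (m - i)

/-- The element `wt_i ∈ 𝒫`. -/
def wt (i : ℤ) : PathAlg :=
  if 1 ≤ i then qint i.toNat • (Pn * Pe) - (qq * qint (i - 1).toNat) • (Pe * Pn)
  else (qq ^ i) • (qint (1 - i).toNat • (Pe * Pn) - qint (-i).toNat • (Pn * Pe))

/-- The defining relations of the `q`-Klyachko algebra. -/
def klyRels : Set (MvPolynomial ℤ F) :=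
  {x | ∃ i : ℤ, x = MvPolynomial.C (1 + qq) * (MvPolynomial.X i * MvPolynomial.X i) -
    (MvPolynomial.C qq * (MvPolynomial.X i * MvPolynomial.X (i - 1)) +
      MvPolynomial.X i * MvPolynomial.X (i + 1))}

/-- The `q`-Klyachko algebra `𝒦`. -/
abbrev Kly : Type := MvPolynomial ℤ F ⧸ Ideal.span klyRels

/-- The generator `u_i` of `𝒦`. -/
def uK (i : ℤ) : Kly := Ideal.Quotient.mk (Ideal.span klyRels) (MvPolynomial.X i)

/-- The element `u(λ) = u_{a_1} ⋯ u_{a_m}` of `𝒦`, where `a(λ)` is the area sequence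
of `λ ⊆ m × m` (here `a_{i+1} = (i+1) - λ_{m-i}` with `lam` 0-indexed). -/
def uLam (m : ℕ) (lam : ℕ → ℕ) : Kly :=
  ∏ i ∈ Finset.range m, uK ((i : ℤ) + 1 - lam (m - 1 - i))

/-- The partition `λ(G(D))` of a Dyck word of size `N`, 0-indexed:
`λ_{i+1} = N - h_{i+1}(D)`. -/
def lamG (N : ℕ) (D : List Bool) : ℕ → ℕ :=
  fun i => if i < N then N - northBefore D i else 0

/-- The number of nonzero parts of `λ(G(D))`. -/
def ellG (N : ℕ) (D : List Bool) : ℕ :=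
  ((Finset.range N).filter fun i => N - northBefore D i ≠ 0).card

/-- The Dyck graph `G(D)` is abelian. -/
def IsAbelian (N : ℕ) (D : List Bool) : Prop := lamG N D 0 + ellG N D ≤ N

/-- `r` is an acyclic orientation of the graph with adjacency `adj` on `Fin N`. -/
def IsAcyclicOrientation (N : ℕ) (adj : Fin N → Fin N → Prop)
    (r : Fin N → Fin N → Bool) : Prop :=
  (∀ a b, r a b = true → adj a b) ∧
  (∀ a b, adj a b → (r a b = true ↔ ¬ r b a = true)) ∧
  (∀ a, ¬ Relation.TransGen (fun u v => r u v = true) a a)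

/-- Number of ascents of an orientation. -/
def ascOrient (N : ℕ) (r : Fin N → Fin N → Bool) : ℕ :=
  Set.ncard {p : Fin N × Fin N | r p.1 p.2 = true ∧ (p.1 : ℕ) < p.2}

/-- Remove from `S` the sources of the orientation restricted to `S`. -/
def peel (N : ℕ) (r : Fin N → Fin N → Bool) (S : Set (Fin N)) : Set (Fin N) :=
  {v ∈ S | ∃ u ∈ S, r u v = true}

/-- Number of sources of the orientation restricted to `S`. -/
def numSources (N : ℕ) (r : Fin N → Fin N → Bool) (S : Set (Fin N)) : ℕ :=
  Set.ncard {v ∈ S | ∀ u ∈ S, ¬ r u v = true}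

open scoped Classical in
/-- `initial(A)`: the number of leading entries of the source sequence equal to `2`. -/
def initialA (N : ℕ) (r : Fin N → Fin N → Bool) : ℕ :=
  Finset.sup ((Finset.range (N + 1)).filter fun j =>
    ∀ k < j, numSources N r ((peel N r)^[k] Set.univ) = 2) id

end
set_option synthInstance.maxHeartbeats 1000000
set_option maxHeartbeats 1000000

noncomputable section StraighteningAux

lemma rel1 : (1 + qq) • (Pe * Pn * Pe) = qq • (Pe * Pe * Pn) + Pn * Pe * Pe := by
  have h := RingQuot.mkAlgHom_rel F PathRel.mod1
  simpa [Pn, Pe, map_smul, map_add, map_mul] using h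

lemma rel2 : (1 + qq) • (Pn * Pe * Pn) = qq • (Pe * Pn * Pn) + Pn * Pn * Pe := by
  have h := RingQuot.mkAlgHom_rel F PathRel.mod2
  simpa [Pn, Pe, map_smul, map_add, map_mul] using h

lemma commAB : Commute (Pe * Pn) (Pn * Pe) := by
  have h1 := congrArg (· * Pn) rel1
  have h2 := congrArg (Pe * ·) rel2
  simp only [smul_mul_assoc, add_mul, mul_smul_comm, mul_add, mul_assoc] at h1 h2
  have h3 := add_left_cancel (h1.symm.trans h2)
  rw [Commute, SemiconjBy]
  simp only [mul_assoc]
  exact h3.symm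



open Submodule

lemma hq : qq ≠ 0 := RatFunc.X_ne_zero

lemma smul_helper {M : Type*} [AddCommGroup M] [Module F M] (a b c d : F) (x y : M) :
    a • x + b • (c • x - d • y) = (-(b*d)) • y + (a + b*c) • x := by
  rw [smul_sub, smul_smul, smul_smul, add_smul, neg_smul]; abel

lemma hNNE : Pn * (Pn * Pe) = (1+qq) • (Pn * (Pe * Pn)) - qq • (Pe * (Pn * Pn)) := by
  have h := rel2
  simp only [mul_assoc] at h
  rw [eq_sub_iff_add_eq, add_comm]
  exact h.symm

lemma hNEE : Pn * (Pe * Pe) = (1+qq) • (Pe * (Pn * Pe)) - qq • (Pe * (Pe * Pn)) := by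
  have h := rel1
  simp only [mul_assoc] at h
  rw [eq_sub_iff_add_eq, add_comm]
  exact h.symm

lemma hEEN : Pe * (Pe * Pn) = (qq⁻¹*(1+qq)) • (Pe * (Pn * Pe)) - qq⁻¹ • (Pn * (Pe * Pe)) := by
  have h : qq • (Pe * (Pe * Pn)) = (1+qq) • (Pe * (Pn * Pe)) - Pn * (Pe * Pe) := by
    have h := rel1
    simp only [mul_assoc] at h
    rw [eq_sub_iff_add_eq]
    exact h.symm
  have h2 := congrArg (qq⁻¹ • ·) h
  simpa only [smul_smul, inv_mul_cancel₀ hq, one_smul, smul_sub] using h2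

lemma lemA (k : ℕ) : ∃ α β : F,
    Pn^(k+1) * Pe = α • (Pe * Pn^(k+1)) + β • (Pn * (Pe * Pn^k)) := by
  induction k with
  | zero => exact ⟨0, 1, by simp⟩
  | succ k ih =>
    obtain ⟨α, β, h⟩ := ih
    refine ⟨-(β*qq), α + β*(1+qq), ?_⟩
    have e1 : Pn^(k+1+1) * Pe = Pn * (Pn^(k+1) * Pe) := by
      rw [pow_succ']; rw [mul_assoc]
    rw [e1, h, mul_add, mul_smul_comm, mul_smul_comm]
    have e2 : Pn * (Pn * (Pe * Pn^k))
        = (1+qq) • (Pn * (Pe * Pn^(k+1))) - qq • (Pe * Pn^(k+1+1)) := by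
      have h3 := congrArg (· * Pn^k) hNNE
      simp only [sub_mul, smul_mul_assoc, mul_assoc] at h3
      simpa only [← pow_succ'] using h3
    rw [e2]
    exact smul_helper α β (1+qq) qq _ _

lemma lemA' (j : ℕ) : ∃ α β : F,
    Pe^(j+1) * Pn = α • (Pn * Pe^(j+1)) + β • (Pe * (Pn * Pe^j)) := by
  induction j with
  | zero => exact ⟨0, 1, by simp⟩
  | succ j ih =>
    obtain ⟨α, β, h⟩ := ih
    refine ⟨-(β*qq⁻¹), α + β*(qq⁻¹*(1+qq)), ?_⟩
    have e1 : Pe^(j+1+1) * Pn = Pe * (Pe^(j+1) * Pn) := by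
      rw [pow_succ']; rw [mul_assoc]
    rw [e1, h, mul_add, mul_smul_comm, mul_smul_comm]
    have e2 : Pe * (Pe * (Pn * Pe^j))
        = (qq⁻¹*(1+qq)) • (Pe * (Pn * Pe^(j+1))) - qq⁻¹ • (Pn * Pe^(j+1+1)) := by
      have h3 := congrArg (· * Pe^j) hEEN
      simp only [sub_mul, smul_mul_assoc, mul_assoc] at h3
      simpa only [← pow_succ'] using h3
    rw [e2]
    exact smul_helper α β (qq⁻¹*(1+qq)) qq⁻¹ _ _


lemma mul_right_mem_of_mem_span {s : Set PathAlg} {x y : PathAlg} {S : Submodule F PathAlg}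
    (hx : x ∈ Submodule.span F s) (h : ∀ z ∈ s, z * y ∈ S) : x * y ∈ S := by
  induction hx using Submodule.span_induction with
  | mem z hz => exact h z hz
  | zero => simpa using S.zero_mem
  | add a b _ _ ha hb => simpa [add_mul] using S.add_mem ha hb
  | smul c a _ ha => simpa [smul_mul_assoc] using S.smul_mem c ha

lemma mul_left_mem_of_mem_span {s : Set PathAlg} {x y : PathAlg} {S : Submodule F PathAlg}
    (hx : x ∈ Submodule.span F s) (h : ∀ z ∈ s, y * z ∈ S) : y * x ∈ S := by
  induction hx using Submodule.span_induction with
  | mem z hz => exact h z hz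
  | zero => simpa using S.zero_mem
  | add a b _ _ ha hb => simpa [mul_add] using S.add_mem ha hb
  | smul c a _ ha => simpa [mul_smul_comm] using S.smul_mem c ha

lemma idAE (a : ℕ) : (Pe*Pn)^a * Pe = Pe * (Pn*Pe)^a := by
  induction a with
  | zero => simp
  | succ a ih =>
    rw [pow_succ, mul_assoc, show Pe*Pn*Pe = Pe*(Pn*Pe) from mul_assoc _ _ _,
      ← mul_assoc, ih, mul_assoc, ← pow_succ]

lemma idMix (s t : ℕ) : (Pe*Pn)^s * ((Pn*Pe)^t * Pe) = (Pn*Pe)^t * ((Pe*Pn)^s * Pe) := by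
  rw [← mul_assoc, (commAB.pow_pow s t).eq, mul_assoc]

lemma lemB (c : ℕ) : (Pn*Pe)^c * Pe ∈ Submodule.span F
    (Set.range fun i : Fin (c+1) => Pe * ((Pe*Pn)^(i:ℕ) * (Pn*Pe)^(c-(i:ℕ)))) := by
  induction c with
  | zero => exact Submodule.subset_span ⟨0, by simp⟩
  | succ c ih =>
    have key : (Pn*Pe)^(c+1) * Pe
        = (1+qq) • ((Pn*Pe)^c * Pe * (Pn*Pe)) - qq • ((Pn*Pe)^c * Pe * (Pe*Pn)) := by
      calc (Pn*Pe)^(c+1) * Pe = (Pn*Pe)^c * (Pn*(Pe*Pe)) := by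
            rw [pow_succ]; simp only [mul_assoc]
        _ = (Pn*Pe)^c * ((1+qq) • (Pe*(Pn*Pe)) - qq • (Pe*(Pe*Pn))) := by rw [hNEE]
        _ = _ := by
            rw [mul_sub, mul_smul_comm, mul_smul_comm]; simp only [mul_assoc]
    rw [key]
    apply Submodule.sub_mem
    · apply Submodule.smul_mem
      refine mul_right_mem_of_mem_span ih ?_
      rintro z ⟨i, rfl⟩
      apply Submodule.subset_span
      refine ⟨⟨(i:ℕ), by omega⟩, ?_⟩
      have harith : c+1-(i:ℕ) = (c-(i:ℕ))+1 := by omega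
      show Pe * ((Pe*Pn)^(i:ℕ) * (Pn*Pe)^(c+1-(i:ℕ))) = _
      rw [harith, pow_succ]; simp only [mul_assoc]
    · apply Submodule.smul_mem
      refine mul_right_mem_of_mem_span ih ?_
      rintro z ⟨i, rfl⟩
      apply Submodule.subset_span
      refine ⟨⟨(i:ℕ)+1, by omega⟩, ?_⟩
      have harith : c+1-((i:ℕ)+1) = c-(i:ℕ) := by omega
      show Pe * ((Pe*Pn)^((i:ℕ)+1) * (Pn*Pe)^(c+1-((i:ℕ)+1))) = _
      rw [harith]
      calc Pe * ((Pe*Pn)^((i:ℕ)+1) * (Pn*Pe)^(c-(i:ℕ)))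
          = Pe * ((Pe*Pn)^(i:ℕ) * ((Pe*Pn) * (Pn*Pe)^(c-(i:ℕ)))) := by
            rw [pow_succ]; simp only [mul_assoc]
        _ = Pe * ((Pe*Pn)^(i:ℕ) * ((Pn*Pe)^(c-(i:ℕ)) * (Pe*Pn))) := by
            rw [(commAB.pow_right (c-(i:ℕ))).eq]
        _ = _ := by simp only [mul_assoc]

lemma lemD (i : ℕ) : Pe * (Pe*Pn)^i ∈ Submodule.span F
    (Set.range fun j : Fin (i+1) => (Pe*Pn)^(j:ℕ) * ((Pn*Pe)^(i-(j:ℕ)) * Pe)) := by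
  induction i with
  | zero => exact Submodule.subset_span ⟨0, by simp⟩
  | succ i ih =>
    have key : Pe * (Pe*Pn)^(i+1)
        = (qq⁻¹*(1+qq)) • ((Pe*Pn) * (Pe * (Pe*Pn)^i)) - qq⁻¹ • ((Pn*Pe) * (Pe * (Pe*Pn)^i)) := by
      have h3 := congrArg (· * (Pe*Pn)^i) hEEN
      simp only [sub_mul, smul_mul_assoc, mul_assoc] at h3
      rw [pow_succ']
      simp only [mul_assoc]
      exact h3
    rw [key]
    apply Submodule.sub_mem
    · apply Submodule.smul_mem
      refine mul_left_mem_of_mem_span ih ?_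
      rintro z ⟨j, rfl⟩
      apply Submodule.subset_span
      refine ⟨⟨(j:ℕ)+1, by omega⟩, ?_⟩
      have harith : i+1-((j:ℕ)+1) = i-(j:ℕ) := by omega
      show (Pe*Pn)^((j:ℕ)+1) * ((Pn*Pe)^(i+1-((j:ℕ)+1)) * Pe) = _
      rw [harith, pow_succ', mul_assoc]
    · apply Submodule.smul_mem
      refine mul_left_mem_of_mem_span ih ?_
      rintro z ⟨j, rfl⟩
      apply Submodule.subset_span
      refine ⟨⟨(j:ℕ), by omega⟩, ?_⟩
      have harith : i+1-(j:ℕ) = (i-(j:ℕ))+1 := by omega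
      show (Pe*Pn)^(j:ℕ) * ((Pn*Pe)^(i+1-(j:ℕ)) * Pe) = _
      rw [harith]
      calc (Pe*Pn)^(j:ℕ) * ((Pn*Pe)^((i:ℕ)-(j:ℕ)+1) * Pe)
          = ((Pe*Pn)^(j:ℕ) * (Pn*Pe)) * ((Pn*Pe)^((i:ℕ)-(j:ℕ)) * Pe) := by
            rw [pow_succ']; simp only [mul_assoc]
        _ = ((Pn*Pe) * (Pe*Pn)^(j:ℕ)) * ((Pn*Pe)^((i:ℕ)-(j:ℕ)) * Pe) := by
            rw [(commAB.pow_left (j:ℕ)).eq]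
        _ = _ := by simp only [mul_assoc]

lemma lemF (a c : ℕ) : (Pe*Pn)^a * ((Pn*Pe)^c * Pe) ∈ Submodule.span F
    (Set.range fun j : Fin (a+c+1) => (Pe*Pn)^(j:ℕ) * ((Pn*Pe)^(a+c-(j:ℕ)) * Pe)) := by
  refine mul_left_mem_of_mem_span (lemB c) ?_
  rintro z ⟨i, rfl⟩
  have e1 : (Pe*Pn)^a * (Pe * ((Pe*Pn)^(i:ℕ) * (Pn*Pe)^(c-(i:ℕ))))
      = (Pe * (Pe*Pn)^(i:ℕ)) * (Pn*Pe)^(a + (c-(i:ℕ))) := by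
    calc (Pe*Pn)^a * (Pe * ((Pe*Pn)^(i:ℕ) * (Pn*Pe)^(c-(i:ℕ))))
        = ((Pe*Pn)^a * Pe) * ((Pe*Pn)^(i:ℕ) * (Pn*Pe)^(c-(i:ℕ))) := by
          simp only [mul_assoc]
      _ = Pe * ((Pn*Pe)^a * ((Pe*Pn)^(i:ℕ) * (Pn*Pe)^(c-(i:ℕ)))) := by
          rw [idAE, mul_assoc]
      _ = Pe * ((Pe*Pn)^(i:ℕ) * ((Pn*Pe)^a * (Pn*Pe)^(c-(i:ℕ)))) := by
          rw [← mul_assoc ((Pn*Pe)^a), ← (commAB.pow_pow (i:ℕ) a).eq, mul_assoc]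
      _ = _ := by rw [← pow_add]; simp only [mul_assoc]
  rw [e1]
  refine mul_right_mem_of_mem_span (lemD (i:ℕ)) ?_
  rintro z ⟨j, rfl⟩
  apply Submodule.subset_span
  have hji : (j:ℕ) ≤ (i:ℕ) := by omega
  have hic : (i:ℕ) ≤ c := by omega
  refine ⟨⟨(j:ℕ) + (a + (c-(i:ℕ))), by omega⟩, ?_⟩
  have harith : a+c-((j:ℕ) + (a + (c-(i:ℕ)))) = (i:ℕ)-(j:ℕ) := by omega
  show (Pe*Pn)^((j:ℕ) + (a + (c-(i:ℕ)))) * ((Pn*Pe)^(a+c-((j:ℕ) + (a + (c-(i:ℕ))))) * Pe) = _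
  rw [harith]
  calc (Pe*Pn)^((j:ℕ) + (a + (c-(i:ℕ)))) * ((Pn*Pe)^((i:ℕ)-(j:ℕ)) * Pe)
      = (Pe*Pn)^(j:ℕ) * ((Pe*Pn)^(a + (c-(i:ℕ))) * ((Pn*Pe)^((i:ℕ)-(j:ℕ)) * Pe)) := by
        rw [pow_add, mul_assoc]
    _ = (Pe*Pn)^(j:ℕ) * ((Pn*Pe)^((i:ℕ)-(j:ℕ)) * ((Pe*Pn)^(a + (c-(i:ℕ))) * Pe)) := by
        rw [idMix]
    _ = (Pe*Pn)^(j:ℕ) * ((Pn*Pe)^((i:ℕ)-(j:ℕ)) * (Pe * (Pn*Pe)^(a + (c-(i:ℕ))))) := by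
        rw [idAE]
    _ = _ := by simp only [mul_assoc]

def ZZ (a b k j : ℕ) : PathAlg := (Pe*Pn)^a * ((Pn*Pe)^b * (Pn^k * Pe^j))

def Zsp (s k j : ℕ) : Submodule F PathAlg :=
  Submodule.span F (Set.range fun a : Fin (s+1) => ZZ (a:ℕ) (s-(a:ℕ)) k j)

lemma ZZ_mem_Zsp {a b k j s : ℕ} (h : a + b = s) : ZZ a b k j ∈ Zsp s k j := by
  apply Submodule.subset_span
  refine ⟨⟨a, by omega⟩, ?_⟩
  have : s - a = b := by omega
  simp only [this]

lemma lemG (a c k : ℕ) : ZZ a c (k+1) 0 * Pe ∈ Zsp (a+c+1) k 0 := by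
  obtain ⟨α, β, h⟩ := lemA k
  have key : ZZ a c (k+1) 0 * Pe
      = α • (((Pe*Pn)^a * ((Pn*Pe)^c * Pe)) * Pn^(k+1))
        + β • ((Pe*Pn)^a * ((Pn*Pe)^(c+1) * Pn^k)) := by
    calc ZZ a c (k+1) 0 * Pe
        = (Pe*Pn)^a * ((Pn*Pe)^c * (Pn^(k+1) * Pe)) := by
          simp only [ZZ, pow_zero, mul_one, mul_assoc]
      _ = (Pe*Pn)^a * ((Pn*Pe)^c * (α • (Pe * Pn^(k+1)) + β • (Pn * (Pe * Pn^k)))) := by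
          rw [h]
      _ = α • ((Pe*Pn)^a * ((Pn*Pe)^c * (Pe * Pn^(k+1))))
          + β • ((Pe*Pn)^a * ((Pn*Pe)^c * (Pn * (Pe * Pn^k)))) := by
          rw [mul_add, mul_add, mul_smul_comm, mul_smul_comm, mul_smul_comm, mul_smul_comm]
      _ = _ := by
          congr 1
          · simp only [mul_assoc]
          · congr 1
            rw [pow_succ]
            simp only [mul_assoc]
  rw [key]
  apply Submodule.add_mem
  · apply Submodule.smul_mem
    refine mul_right_mem_of_mem_span (lemF a c) ?_
    rintro z ⟨i, rfl⟩
    have e : ((Pe*Pn)^(i:ℕ) * ((Pn*Pe)^(a+c-(i:ℕ)) * Pe)) * Pn^(k+1)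
        = ZZ ((i:ℕ)+1) (a+c-(i:ℕ)) k 0 := by
      calc ((Pe*Pn)^(i:ℕ) * ((Pn*Pe)^(a+c-(i:ℕ)) * Pe)) * Pn^(k+1)
          = (Pe*Pn)^(i:ℕ) * ((Pn*Pe)^(a+c-(i:ℕ)) * ((Pe*Pn) * Pn^k)) := by
            rw [pow_succ']; simp only [mul_assoc]
        _ = (Pe*Pn)^(i:ℕ) * (((Pe*Pn) * (Pn*Pe)^(a+c-(i:ℕ))) * Pn^k) := by
            rw [(commAB.pow_right (a+c-(i:ℕ))).eq]; simp only [mul_assoc]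
        _ = ZZ ((i:ℕ)+1) (a+c-(i:ℕ)) k 0 := by
            simp only [ZZ, pow_zero, mul_one, pow_succ]
            simp only [mul_assoc]
    rw [e]
    exact ZZ_mem_Zsp (by omega)
  · apply Submodule.smul_mem
    have e : (Pe*Pn)^a * ((Pn*Pe)^(c+1) * Pn^k) = ZZ a (c+1) k 0 := by
      simp only [ZZ, pow_zero, mul_one]
    rw [e]
    exact ZZ_mem_Zsp (by omega)

lemma lemG' (a b j : ℕ) : ZZ a b 0 (j+1) * Pn ∈ Zsp (a+b+1) 0 j := by
  obtain ⟨α, β, h⟩ := lemA' j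
  have key : ZZ a b 0 (j+1) * Pn
      = α • ((Pe*Pn)^a * ((Pn*Pe)^(b+1) * Pe^j))
        + β • ((Pe*Pn)^(a+1) * ((Pn*Pe)^b * Pe^j)) := by
    calc ZZ a b 0 (j+1) * Pn
        = (Pe*Pn)^a * ((Pn*Pe)^b * (Pe^(j+1) * Pn)) := by
          simp only [ZZ, pow_zero, one_mul, mul_assoc]
      _ = (Pe*Pn)^a * ((Pn*Pe)^b * (α • (Pn * Pe^(j+1)) + β • (Pe * (Pn * Pe^j)))) := by
          rw [h]
      _ = α • ((Pe*Pn)^a * ((Pn*Pe)^b * (Pn * Pe^(j+1))))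
          + β • ((Pe*Pn)^a * ((Pn*Pe)^b * (Pe * (Pn * Pe^j)))) := by
          rw [mul_add, mul_add, mul_smul_comm, mul_smul_comm, mul_smul_comm, mul_smul_comm]
      _ = _ := by
          congr 1
          · congr 1
            rw [pow_succ (Pn*Pe) b, pow_succ' Pe j]
            simp only [mul_assoc]
          · congr 1
            have e2 : (Pe*Pn)^(a+1) * ((Pn*Pe)^b * Pe^j)
                = (Pe*Pn)^a * ((Pn*Pe)^b * (Pe * (Pn * Pe^j))) := by
              calc (Pe*Pn)^(a+1) * ((Pn*Pe)^b * Pe^j)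
                  = (Pe*Pn)^a * (((Pe*Pn) * (Pn*Pe)^b) * Pe^j) := by
                    rw [pow_succ]; simp only [mul_assoc]
                _ = (Pe*Pn)^a * (((Pn*Pe)^b * (Pe*Pn)) * Pe^j) := by
                    rw [(commAB.pow_right b).eq]
                _ = _ := by simp only [mul_assoc]
            rw [e2]
  rw [key]
  apply Submodule.add_mem
  · apply Submodule.smul_mem
    have e : (Pe*Pn)^a * ((Pn*Pe)^(b+1) * Pe^j) = ZZ a (b+1) 0 j := by
      simp only [ZZ, pow_zero, one_mul]
    rw [e]
    exact ZZ_mem_Zsp (by omega)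
  · apply Submodule.smul_mem
    have e : (Pe*Pn)^(a+1) * ((Pn*Pe)^b * Pe^j) = ZZ (a+1) b 0 j := by
      simp only [ZZ, pow_zero, one_mul]
    rw [e]
    exact ZZ_mem_Zsp (by omega)

lemma wordElem_append (u v : List Bool) : wordElem (u ++ v) = wordElem u * wordElem v := by
  simp [wordElem]

lemma main_span (w : List Bool) :
    wordElem w ∈ Zsp (min (w.count true) (w.count false))
      (w.count true - w.count false) (w.count false - w.count true) := by
  induction w using List.reverseRecOn with
  | nil =>
    have h1 : (1 : PathAlg) ∈ Zsp 0 0 0 := by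
      have := ZZ_mem_Zsp (a:=0) (b:=0) (k:=0) (j:=0) (s:=0) rfl
      simpa [ZZ] using this
    simpa [wordElem] using h1
  | append_singleton w b ih =>
    have hw : wordElem (w ++ [b]) = wordElem w * (if b then Pn else Pe) := by
      simp [wordElem]
    cases b with
    | true =>
      have hc1 : (w ++ [true]).count true = w.count true + 1 := by simp
      have hc2 : (w ++ [true]).count false = w.count false := by simp
      rw [hw, hc1, hc2, if_pos rfl]
      set m' := w.count true
      set n' := w.count false
      rcases le_or_gt n' m' with hle | hlt
      · have e1 : min m' n' = n' := by omega
        have e2 : min (m'+1) n' = n' := by omega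
        have e3 : n' - m' = 0 := by omega
        have e4 : n' - (m'+1) = 0 := by omega
        have e5 : m'+1 - n' = (m' - n') + 1 := by omega
        rw [e2, e4, e5]
        rw [e1, e3] at ih
        refine mul_right_mem_of_mem_span ih ?_
        rintro z ⟨a, rfl⟩
        have ha := a.isLt
        have e : ZZ (a:ℕ) (n'-(a:ℕ)) (m'-n') 0 * Pn = ZZ (a:ℕ) (n'-(a:ℕ)) ((m'-n')+1) 0 := by
          simp only [ZZ, pow_zero, mul_one, pow_succ]
          simp only [mul_assoc]
        rw [e]; exact ZZ_mem_Zsp (by omega)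
      · have e1 : min m' n' = m' := by omega
        have e2 : m' - n' = 0 := by omega
        rw [e1, e2] at ih
        have e3 : min (m'+1) n' = m'+1 := by omega
        have e4 : (m'+1) - n' = 0 := by omega
        rw [e3, e4]
        obtain ⟨j, hj⟩ : ∃ j, n' - m' = j + 1 := ⟨n' - m' - 1, by omega⟩
        rw [hj] at ih
        have e5 : n' - (m'+1) = j := by omega
        rw [e5]
        refine mul_right_mem_of_mem_span ih ?_
        rintro z ⟨a, rfl⟩
        have ha := a.isLt
        have hsum : (a:ℕ) + (m' - (a:ℕ)) = m' := by omega
        have hg := lemG' (a:ℕ) (m'-(a:ℕ)) j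
        rw [hsum] at hg
        exact hg
    | false =>
      have hc1 : (w ++ [false]).count true = w.count true := by simp
      have hc2 : (w ++ [false]).count false = w.count false + 1 := by simp
      rw [hw, hc1, hc2, if_neg (by simp)]
      set m' := w.count true
      set n' := w.count false
      rcases le_or_gt m' n' with hle | hlt
      · have e1 : min m' n' = m' := by omega
        have e2 : min m' (n'+1) = m' := by omega
        have e3 : m' - n' = 0 := by omega
        have e4 : m' - (n'+1) = 0 := by omega
        have e5 : n'+1 - m' = (n' - m') + 1 := by omega
        rw [e2, e4, e5]
        rw [e1, e3] at ih
        refine mul_right_mem_of_mem_span ih ?_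
        rintro z ⟨a, rfl⟩
        have ha := a.isLt
        have e : ZZ (a:ℕ) (m'-(a:ℕ)) 0 (n'-m') * Pe = ZZ (a:ℕ) (m'-(a:ℕ)) 0 ((n'-m')+1) := by
          simp only [ZZ, pow_zero, one_mul, pow_succ]
          simp only [mul_assoc]
        rw [e]; exact ZZ_mem_Zsp (by omega)
      · have e1 : min m' n' = n' := by omega
        have e2 : n' - m' = 0 := by omega
        rw [e1, e2] at ih
        have e3 : min m' (n'+1) = n'+1 := by omega
        have e4 : (n'+1) - m' = 0 := by omega
        rw [e3, e4]
        obtain ⟨k, hk⟩ : ∃ k, m' - n' = k + 1 := ⟨m' - n' - 1, by omega⟩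
        rw [hk] at ih
        have e5 : m' - (n'+1) = k := by omega
        rw [e5]
        refine mul_right_mem_of_mem_span ih ?_
        rintro z ⟨a, rfl⟩
        have ha := a.isLt
        have hsum : (a:ℕ) + (n' - (a:ℕ)) = n' := by omega
        have hg := lemG (a:ℕ) (n'-(a:ℕ)) k
        rw [hsum] at hg
        exact hg

abbrev VV : Type := ℤ →₀ F

def cc (k : ℤ) : F := 1 + qq ^ (-k)

def NNop : VV →ₗ[F] VV := Finsupp.lmapDomain F F (fun k => k + 1)

def EEop : VV →ₗ[F] VV := Finsupp.lsum F fun k => cc k • Finsupp.lsingle (k-1)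

lemma NN_single (k : ℤ) (x : F) : NNop (Finsupp.single k x) = Finsupp.single (k+1) x := by
  rw [NNop, Finsupp.lmapDomain_apply, Finsupp.mapDomain_single]

lemma EE_single (k : ℤ) (x : F) :
    EEop (Finsupp.single k x) = Finsupp.single (k-1) (cc k * x) := by
  rw [EEop, Finsupp.lsum_single]
  simp only [LinearMap.smul_apply, Finsupp.lsingle_apply, Finsupp.smul_single, smul_eq_mul]

lemma hzpow (d : ℕ) (h : qq ^ d = 1) : d = 0 := by
  have h2 : algebraMap (Polynomial ℂ) F (Polynomial.X ^ d) = algebraMap (Polynomial ℂ) F 1 := by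
    rw [map_pow, map_one, RatFunc.algebraMap_X]
    exact h
  have h3 := RatFunc.algebraMap_injective ℂ h2
  have h4 := congrArg Polynomial.natDegree h3
  simpa using h4

lemma qzpow_inj (K K' : ℤ) (h : qq ^ K = qq ^ K') : K = K' := by
  have key : ∀ d : ℤ, qq ^ d = 1 → d = 0 := by
    intro d hd
    obtain ⟨dn, rfl | rfl⟩ := d.eq_nat_or_neg
    · have := hzpow dn (by rwa [zpow_natCast] at hd)
      omega
    · rw [zpow_neg, zpow_natCast, inv_eq_one] at hd
      have := hzpow dn hd
      omega
  have h2 : qq ^ (K - K') = 1 := by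
    rw [zpow_sub₀ hq, h, div_self (zpow_ne_zero _ hq)]
  have := key _ h2
  omega

lemma ccne (k : ℤ) : cc k ≠ 0 := by
  intro h
  have h1 : qq ^ (-k) = -1 := by
    have : (1:F) + qq^(-k) = 0 := h
    linear_combination this
  have h2 : qq ^ (-k + -k) = qq ^ (0:ℤ) := by
    rw [zpow_add₀ hq, h1, zpow_zero]
    ring
  have h3 := qzpow_inj _ _ h2
  have hk : k = 0 := by omega
  rw [hk] at h1
  have h4 : (1:F) = -1 := by simpa using h1
  have h5 : (2:F) = 0 := by linear_combination h4
  have h6 : (algebraMap (Polynomial ℂ) F) 2 = (algebraMap (Polynomial ℂ) F) 0 := by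
    rw [map_ofNat, map_zero]; exact h5
  have h7 := RatFunc.algebraMap_injective ℂ h6
  norm_num at h7

lemma hrec (k : ℤ) : (1+qq) * cc k = qq * cc (k+1) + cc (k-1) := by
  unfold cc
  have e1 : qq * qq^(-(k+1)) = qq^(-k) := by
    calc qq * qq^(-(k+1)) = qq^(1:ℤ) * qq^(-(k+1)) := by rw [zpow_one]
      _ = qq^((1:ℤ) + -(k+1)) := (zpow_add₀ hq _ _).symm
      _ = qq^(-k) := by congr 1; ring
  have e2 : qq^(-(k-1)) = qq * qq^(-k) := by
    calc qq^(-(k-1)) = qq^((1:ℤ) + -k) := by congr 1; ring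
      _ = qq^(1:ℤ) * qq^(-k) := zpow_add₀ hq _ _
      _ = qq * qq^(-k) := by rw [zpow_one]
  linear_combination -e1 - e2

lemma relEnd1 : (1+qq) • (EEop * NNop * EEop) = qq • (EEop * EEop * NNop) + NNop * EEop * EEop := by
  apply Finsupp.lhom_ext
  intro k x
  simp only [LinearMap.smul_apply, LinearMap.add_apply, Module.End.mul_apply,
    NN_single, EE_single, Finsupp.smul_single, smul_eq_mul,
    sub_add_cancel, add_sub_cancel_right]
  rw [← Finsupp.single_add]
  congr 1
  linear_combination (x * cc k) * hrec k

lemma relEnd2 : (1+qq) • (NNop * EEop * NNop) = qq • (EEop * NNop * NNop) + NNop * NNop * EEop := by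
  apply Finsupp.lhom_ext
  intro k x
  simp only [LinearMap.smul_apply, LinearMap.add_apply, Module.End.mul_apply,
    NN_single, EE_single, Finsupp.smul_single, smul_eq_mul,
    sub_add_cancel, add_sub_cancel_right]
  rw [← Finsupp.single_add]
  congr 1
  have h := hrec (k+1)
  simp only [add_sub_cancel_right] at h
  linear_combination x * h

def rep : PathAlg →ₐ[F] Module.End F VV :=
  RingQuot.liftAlgHom F ⟨FreeAlgebra.lift F (fun b => cond b NNop EEop), by
    intro x y r
    cases r with
    | mod1 =>
      simp only [map_smul, map_add, map_mul, FreeAlgebra.lift_ι_apply, Bool.cond_true,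
        Bool.cond_false]
      exact relEnd1
    | mod2 =>
      simp only [map_smul, map_add, map_mul, FreeAlgebra.lift_ι_apply, Bool.cond_true,
        Bool.cond_false]
      exact relEnd2⟩

lemma rep_Pn : rep Pn = NNop := by
  rw [rep, Pn, RingQuot.liftAlgHom_mkAlgHom_apply, FreeAlgebra.lift_ι_apply, Bool.cond_true]

lemma rep_Pe : rep Pe = EEop := by
  rw [rep, Pe, RingQuot.liftAlgHom_mkAlgHom_apply, FreeAlgebra.lift_ι_apply, Bool.cond_false]

lemma qqne1 : qq ≠ 1 := by
  intro h
  have := hzpow 1 (by rw [pow_one]; exact h)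
  omega

lemma Npow_single (k : ℕ) (j : ℤ) :
    (NNop^k) (Finsupp.single j 1) = Finsupp.single (j+k) 1 := by
  induction k with
  | zero => simp
  | succ k ih =>
    rw [pow_succ', Module.End.mul_apply, ih, NN_single]
    congr 1
    push_cast
    ring

lemma Bpow_single (b : ℕ) (K : ℤ) :
    ((NNop * EEop)^b) (Finsupp.single K 1) = (cc K)^b • Finsupp.single K 1 := by
  induction b with
  | zero => simp
  | succ b ih =>
    rw [pow_succ', Module.End.mul_apply, ih, map_smul, Module.End.mul_apply, EE_single, NN_single]
    rw [sub_add_cancel, mul_one, pow_succ', mul_smul]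
    rw [smul_comm]
    congr 1
    rw [Finsupp.smul_single, smul_eq_mul, mul_one]

lemma Apow_single (a : ℕ) (K : ℤ) :
    ((EEop * NNop)^a) (Finsupp.single K 1) = (cc (K+1))^a • Finsupp.single K 1 := by
  induction a with
  | zero => simp
  | succ a ih =>
    rw [pow_succ', Module.End.mul_apply, ih, map_smul, Module.End.mul_apply, NN_single, EE_single]
    rw [add_sub_cancel_right, mul_one, pow_succ', mul_smul]
    rw [smul_comm]
    congr 1
    rw [Finsupp.smul_single, smul_eq_mul, mul_one]

def ttt (K : ℤ) : F := cc (K+1) / cc K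

lemma ttt_inj (K K' : ℤ) (h : ttt K = ttt K') : K = K' := by
  have hEq : cc (K+1) * cc K' = cc (K'+1) * cc K := (div_eq_div_iff (ccne K) (ccne K')).mp h
  unfold cc at hEq
  have hx : qq^(-(K+1)) = qq^(-K) * qq⁻¹ := by
    rw [← zpow_neg_one, ← zpow_add₀ hq]; congr 1; ring
  have hx' : qq^(-(K'+1)) = qq^(-K') * qq⁻¹ := by
    rw [← zpow_neg_one, ← zpow_add₀ hq]; congr 1; ring
  rw [hx, hx'] at hEq
  have hfac : (qq^(-K) - qq^(-K')) * (qq⁻¹ - 1) = 0 := by linear_combination hEq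
  rcases mul_eq_zero.mp hfac with h1 | h2
  · have := qzpow_inj _ _ (sub_eq_zero.mp h1)
    omega
  · exact absurd (inv_eq_one.mp (by linear_combination h2)) qqne1

lemma sum_eval (nn mk : ℕ) (g : Fin (nn+1) → F)
    (hg : ∑ a : Fin (nn+1), g a • ((Pe*Pn)^(a:ℕ) * (Pn*Pe)^(nn-(a:ℕ)) * Pn^mk) = 0)
    (j : ℤ) : ∑ a : Fin (nn+1), g a * ttt (j + (mk:ℤ)) ^ (a:ℕ) = 0 := by
  have term : ∀ a : Fin (nn+1),
      (rep ((Pe*Pn)^(a:ℕ) * (Pn*Pe)^(nn-(a:ℕ)) * Pn^mk)) (Finsupp.single j 1)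
        = (cc (j + (mk:ℤ))^(nn-(a:ℕ)) * cc (j + (mk:ℤ) + 1)^(a:ℕ))
            • Finsupp.single (j + (mk:ℤ)) 1 := by
    intro a
    simp only [map_mul, map_pow, rep_Pn, rep_Pe]
    rw [Module.End.mul_apply, Module.End.mul_apply, Npow_single, Bpow_single, map_smul,
      Apow_single, smul_smul]
  have h0 := congrArg (fun x : PathAlg => (rep x) (Finsupp.single j 1)) hg
  simp only [map_sum, map_smul, LinearMap.sum_apply, LinearMap.smul_apply, map_zero,
    LinearMap.zero_apply] at h0
  rw [Finset.sum_congr rfl (fun a _ => by rw [term a])] at h0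
  have h1 := congrArg (fun v : VV => v (j + (mk:ℤ))) h0
  simp only [Finsupp.coe_finset_sum, Finset.sum_apply, Finsupp.smul_apply,
    Finsupp.single_eq_same, smul_eq_mul, Finsupp.coe_zero, Pi.zero_apply, mul_one] at h1
  have conv : ∀ a ∈ (Finset.univ : Finset (Fin (nn+1))),
      g a * (cc (j + (mk:ℤ))^(nn-(a:ℕ)) * cc (j + (mk:ℤ) + 1)^(a:ℕ))
        = (g a * ttt (j + (mk:ℤ)) ^ (a:ℕ)) * cc (j + (mk:ℤ))^nn := by
    intro a _
    have ha : (a:ℕ) ≤ nn := by omega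
    rw [ttt, div_pow, pow_sub₀ _ (ccne _) ha]
    field_simp
  rw [Finset.sum_congr rfl conv, ← Finset.sum_mul] at h1
  rcases mul_eq_zero.mp h1 with h2 | h2
  · exact h2
  · exact absurd h2 (pow_ne_zero _ (ccne _))

lemma indep (m n : ℕ) :
    LinearIndependent F
      (fun a : Fin (n + 1) =>
        (Pe * Pn) ^ (a : ℕ) * (Pn * Pe) ^ (n - (a : ℕ)) * Pn ^ (m - n)) := by
  rw [Fintype.linearIndependent_iff]
  intro g hg
  have key := fun jf : Fin (n+1) => sum_eval n (m-n) g hg ((jf:ℕ):ℤ)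
  have hinj : Function.Injective
      (fun jf : Fin (n+1) => ttt (((jf:ℕ):ℤ) + ((m-n:ℕ):ℤ))) := by
    intro j j' hjj
    have := ttt_inj _ _ hjj
    have hval : ((j:ℕ):ℤ) = ((j':ℕ):ℤ) := by omega
    exact Fin.ext (by exact_mod_cast hval)
  have := Matrix.eq_zero_of_forall_index_sum_mul_pow_eq_zero hinj key
  intro i
  exact congrFun this i

lemma wordElem_en (a : ℕ) :
    wordElem ((List.replicate a [false, true]).flatten) = (Pe*Pn)^a := by
  induction a with
  | zero => simp [wordElem]
  | succ a ih =>
    rw [List.replicate_succ, List.flatten_cons, wordElem_append, ih, pow_succ']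
    congr 1
    simp [wordElem]

lemma wordElem_ne (b : ℕ) :
    wordElem ((List.replicate b [true, false]).flatten) = (Pn*Pe)^b := by
  induction b with
  | zero => simp [wordElem]
  | succ b ih =>
    rw [List.replicate_succ, List.flatten_cons, wordElem_append, ih, pow_succ']
    congr 1
    simp [wordElem]

lemma wordElem_rep_true (k : ℕ) : wordElem (List.replicate k true) = Pn^k := by
  induction k with
  | zero => simp [wordElem]
  | succ k ih =>
    rw [List.replicate_succ, show (true :: List.replicate k true) = [true] ++ List.replicate k true from rfl,
      wordElem_append, ih, pow_succ']
    congr 1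
    simp [wordElem]

lemma count_flat (x : List Bool) (a : ℕ) (b : Bool) :
    ((List.replicate a x).flatten).count b = a * x.count b := by
  induction a with
  | zero => simp
  | succ a ih =>
    rw [List.replicate_succ, List.flatten_cons, List.count_append, ih]
    ring

def zigword (a b k : ℕ) : List Bool :=
  (List.replicate a [false,true]).flatten ++
    ((List.replicate b [true,false]).flatten ++ List.replicate k true)

lemma zig_elem (a b k : ℕ) : wordElem (zigword a b k) = (Pe*Pn)^a * (Pn*Pe)^b * Pn^k := by
  rw [zigword, wordElem_append, wordElem_append, wordElem_en, wordElem_ne, wordElem_rep_true,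
    mul_assoc]

lemma zig_count_true (a b k : ℕ) : (zigword a b k).count true = a + b + k := by
  simp [zigword, List.count_append, count_flat, List.count_replicate]
  omega

lemma zig_count_false (a b k : ℕ) : (zigword a b k).count false = a + b := by
  simp [zigword, List.count_append, count_flat, List.count_replicate]

end StraighteningAux

/-- The zigzag monomials form a basis of `𝒫_{m,n}`. -/
theorem stmt17 (m n : ℕ) (hmn : n ≤ m) :
    LinearIndependent F
      (fun a : Fin (n + 1) =>
        (Pe * Pn) ^ (a : ℕ) * (Pn * Pe) ^ (n - (a : ℕ)) * Pn ^ (m - n)) ∧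
    Submodule.span F
      (Set.range fun a : Fin (n + 1) =>
        (Pe * Pn) ^ (a : ℕ) * (Pn * Pe) ^ (n - (a : ℕ)) * Pn ^ (m - n)) =
      Pmn m n := by

  constructor
  · exact indep m n
  · apply le_antisymm
    · rw [Submodule.span_le]
      rintro x ⟨a, rfl⟩
      apply Submodule.subset_span
      refine ⟨zigword (a:ℕ) (n-(a:ℕ)) (m-n), ?_, ?_, ?_⟩
      · rw [zig_count_true]; omega
      · rw [zig_count_false]; omega
      · rw [zig_elem]
    · rw [Pmn, Submodule.span_le]
      rintro x ⟨w, h1, h2, rfl⟩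
      have hm := main_span w
      rw [h1, h2, min_eq_right hmn, Nat.sub_eq_zero_of_le hmn] at hm
      have hfun : (fun a : Fin (n+1) => ZZ (a:ℕ) (n-(a:ℕ)) (m-n) 0)
          = (fun a : Fin (n+1) =>
              (Pe * Pn) ^ (a : ℕ) * (Pn * Pe) ^ (n - (a : ℕ)) * Pn ^ (m - n)) := by
        funext a
        simp [ZZ, mul_assoc]
      rw [Zsp, hfun] at hm
      exact hm
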